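/- Let R ≥ 0 and let θ = (ω,v) ∈ ℝ³×ℝ³ satisfy √(‖ω‖² + ‖v‖²) ≤ R. Then the matrix exponential of the se(3) element X(ω,v) satisfies ‖exp(X(ω,v))‖_op ≤ 1 + R, where ‖·‖_op is the ℓ²→ℓ² operator norm on 4×4 real matrices. -/

import Mathlib

open scoped Matrix
open NormedSpace

/-- ℓ²→ℓ² operator norm of a real matrix. -/
noncomputable def opNorm {m n : ℕ} (A : Matrix (Fin m) (Fin n) ℝ) : ℝ :=
  ‖LinearMap.toContinuousLinearMap (Matrix.toEuclideanLin A)‖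

/-- The hat map: `hat ω` is the skew-symmetric matrix with `hat ω *ᵥ x = ω × x`. -/
def hat (ω : EuclideanSpace ℝ (Fin 3)) : Matrix (Fin 3) (Fin 3) ℝ :=
  !![0, -ω 2, ω 1; ω 2, 0, -ω 0; -ω 1, ω 0, 0]

/-- The homogeneous 4×4 representation of the se(3) element `(ω, v)`. -/
def seX (ω v : EuclideanSpace ℝ (Fin 3)) : Matrix (Fin 4) (Fin 4) ℝ :=
  Matrix.of fun i j =>
    if hi : (i : ℕ) < 3 then
      if hj : (j : ℕ) < 3 then hat ω ⟨i, hi⟩ ⟨j, hj⟩ else v ⟨i, hi⟩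
    else 0

namespace SE3Aux

/-- Extend a 3-vector to a 4-vector by a zero last coordinate. -/
def pad (x : Fin 3 → ℝ) : Fin 4 → ℝ := fun i => if h : (i : ℕ) < 3 then x ⟨i, h⟩ else 0

lemma seX_mulVec_pad (ω v : EuclideanSpace ℝ (Fin 3)) (x : Fin 3 → ℝ) :
    seX ω v *ᵥ pad x = pad (hat ω *ᵥ x) := by
  funext i
  fin_cases i <;>
    simp (config := { decide := true }) [seX, pad, hat, Matrix.mulVec, dotProduct,
      Fin.sum_univ_four, Fin.sum_univ_three]

lemma seX_mulVec_single (ω v : EuclideanSpace ℝ (Fin 3)) :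
    seX ω v *ᵥ Pi.single 3 1 = pad (fun i => v i) := by
  funext i
  fin_cases i <;>
    simp (config := { decide := true }) [seX, pad, hat, Matrix.mulVec, dotProduct,
      Fin.sum_univ_four]

lemma seX_row_last (ω v : EuclideanSpace ℝ (Fin 3)) (j : Fin 4) : seX ω v 3 j = 0 := by
  simp (config := { decide := true }) [seX]

lemma smul_seX (s : ℝ) (ω v : EuclideanSpace ℝ (Fin 3)) :
    s • seX ω v = seX (s • ω) (s • v) := by
  funext i j
  fin_cases i <;> fin_cases j <;>
    simp (config := { decide := true }) [seX, hat, mul_comm]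

lemma hat_transpose (ω : EuclideanSpace ℝ (Fin 3)) : (hat ω)ᵀ = -(hat ω) := by
  funext i j
  fin_cases i <;> fin_cases j <;> simp [hat]

lemma eq_pad_add_single (u : Fin 4 → ℝ) :
    u = pad (fun i => u i.castSucc) + u 3 • (Pi.single 3 1 : Fin 4 → ℝ) := by
  funext i
  fin_cases i <;> simp (config := { decide := true }) [pad, Fin.castSucc] <;> congr 1 <;> decide

/-- mulVec by a fixed vector, as a linear map in the matrix argument. -/
def mulVecRight {m n : ℕ} (w : Fin n → ℝ) : Matrix (Fin m) (Fin n) ℝ →ₗ[ℝ] (Fin m → ℝ) where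
  toFun A := A *ᵥ w
  map_add' A B := Matrix.add_mulVec A B w
  map_smul' c A := Matrix.smul_mulVec c A w

def padL : (Fin 3 → ℝ) →ₗ[ℝ] (Fin 4 → ℝ) where
  toFun := pad
  map_add' x y := by funext i; by_cases h : (i : ℕ) < 3 <;> simp [pad, h]
  map_smul' c x := by funext i; by_cases h : (i : ℕ) < 3 <;> simp [pad, h]

lemma exp_mulVec {m : ℕ} (A : Matrix (Fin m) (Fin m) ℝ) (w : Fin m → ℝ) :
    exp A *ᵥ w = ∑' n : ℕ, (n.factorial⁻¹ : ℝ) • (A ^ n *ᵥ w) := by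
  letI : NormedRing (Matrix (Fin m) (Fin m) ℝ) := Matrix.linftyOpNormedRing
  letI : NormedAlgebra ℝ (Matrix (Fin m) (Fin m) ℝ) := Matrix.linftyOpNormedAlgebra
  have hs : Summable fun n : ℕ => (n.factorial⁻¹ : ℝ) • A ^ n := expSeries_summable' A
  have := (LinearMap.toContinuousLinearMap (mulVecRight (m := m) w)).map_tsum hs
  rw [exp_eq_tsum ℝ]
  simpa [mulVecRight] using this

lemma summable_mulVec {m : ℕ} (A : Matrix (Fin m) (Fin m) ℝ) (w : Fin m → ℝ) :
    Summable fun n : ℕ => (n.factorial⁻¹ : ℝ) • (A ^ n *ᵥ w) := by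
  letI : NormedRing (Matrix (Fin m) (Fin m) ℝ) := Matrix.linftyOpNormedRing
  letI : NormedAlgebra ℝ (Matrix (Fin m) (Fin m) ℝ) := Matrix.linftyOpNormedAlgebra
  have hs : Summable fun n : ℕ => (n.factorial⁻¹ : ℝ) • A ^ n := expSeries_summable' A
  have := hs.map (LinearMap.toContinuousLinearMap (mulVecRight (m := m) w)).toLinearMap
    (LinearMap.toContinuousLinearMap (mulVecRight (m := m) w)).continuous
  simpa [Function.comp_def, mulVecRight, Matrix.smul_mulVec] using this

lemma pow_mulVec_pad (ω v : EuclideanSpace ℝ (Fin 3)) (x : Fin 3 → ℝ) (n : ℕ) :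
    (seX ω v) ^ n *ᵥ pad x = pad ((hat ω) ^ n *ᵥ x) := by
  induction n with
  | zero => simp [pad]
  | succ n ih =>
      rw [pow_succ', pow_succ', ← Matrix.mulVec_mulVec, ← Matrix.mulVec_mulVec, ih,
        seX_mulVec_pad]

lemma exp_seX_mulVec_pad (ω v : EuclideanSpace ℝ (Fin 3)) (x : Fin 3 → ℝ) :
    exp (seX ω v) *ᵥ pad x = pad (exp (hat ω) *ᵥ x) := by
  rw [exp_mulVec, exp_mulVec]
  have hsum := summable_mulVec (hat ω) x
  have h2 : pad (∑' n : ℕ, (n.factorial⁻¹ : ℝ) • ((hat ω) ^ n *ᵥ x)) =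
      ∑' n : ℕ, (n.factorial⁻¹ : ℝ) • pad ((hat ω) ^ n *ᵥ x) := by
    have := (LinearMap.toContinuousLinearMap padL).map_tsum hsum
    simpa [padL, map_smul] using this
  rw [h2]
  simp only [pow_mulVec_pad]

lemma pow_row_last (ω v : EuclideanSpace ℝ (Fin 3)) (n : ℕ) (hn : n ≠ 0) (j : Fin 4) :
    ((seX ω v) ^ n) 3 j = 0 := by
  cases n with
  | zero => exact absurd rfl hn
  | succ k =>
      rw [pow_succ']
      simp [Matrix.mul_apply, seX_row_last]

lemma exp_seX_mulVec_last (ω v : EuclideanSpace ℝ (Fin 3)) (u : Fin 4 → ℝ) :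
    (exp (seX ω v) *ᵥ u) 3 = u 3 := by
  rw [exp_mulVec]
  rw [tsum_apply (summable_mulVec _ _)]
  rw [tsum_eq_single 0]
  · simp
  · intro n hn
    have : ((seX ω v) ^ n *ᵥ u) 3 = 0 := by
      simp only [Matrix.mulVec, dotProduct]
      exact Finset.sum_eq_zero fun j _ => by rw [pow_row_last ω v n hn, zero_mul]
    simp [this]

lemma exp_skew_orth (S : Matrix (Fin 3) (Fin 3) ℝ) (h : Sᵀ = -S) :
    (exp S)ᵀ * exp S = 1 := by
  rw [← Matrix.exp_transpose, h, ← Matrix.exp_add_of_commute (-S) S (Commute.neg_left rfl),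
    neg_add_cancel, exp_zero]

lemma dot_exp_skew (S : Matrix (Fin 3) (Fin 3) ℝ) (h : Sᵀ = -S) (x : Fin 3 → ℝ) :
    (exp S *ᵥ x) ⬝ᵥ (exp S *ᵥ x) = x ⬝ᵥ x := by
  have h1 : exp S *ᵥ x = x ᵥ* (exp S)ᵀ := by
    rw [← Matrix.mulVec_transpose, Matrix.transpose_transpose]
  rw [Matrix.dotProduct_mulVec, h1, Matrix.vecMul_vecMul, exp_skew_orth S h,
    Matrix.vecMul_one]


lemma equiv_symm_add {n : ℕ} (x y : Fin n → ℝ) :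
    (WithLp.equiv 2 (Fin n → ℝ)).symm (x + y)
      = (WithLp.equiv 2 (Fin n → ℝ)).symm x + (WithLp.equiv 2 (Fin n → ℝ)).symm y := rfl

lemma equiv_symm_sub {n : ℕ} (x y : Fin n → ℝ) :
    (WithLp.equiv 2 (Fin n → ℝ)).symm (x - y)
      = (WithLp.equiv 2 (Fin n → ℝ)).symm x - (WithLp.equiv 2 (Fin n → ℝ)).symm y := rfl

lemma equiv_symm_smul {n : ℕ} (c : ℝ) (x : Fin n → ℝ) :
    (WithLp.equiv 2 (Fin n → ℝ)).symm (c • x) = c • (WithLp.equiv 2 (Fin n → ℝ)).symm x := rfl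

lemma dot_self_nonneg {n : ℕ} (a : Fin n → ℝ) : 0 ≤ a ⬝ᵥ a :=
  Finset.sum_nonneg fun i _ => mul_self_nonneg (a i)

lemma norm_symm_eq {n : ℕ} (y : Fin n → ℝ) :
    ‖(WithLp.equiv 2 (Fin n → ℝ)).symm y‖ = Real.sqrt (y ⬝ᵥ y) := by
  rw [EuclideanSpace.norm_eq]
  congr 1
  exact Finset.sum_congr rfl fun i _ => by
    simp [Real.norm_eq_abs, sq_abs, sq]

lemma dot_pad (a b : Fin 3 → ℝ) : pad a ⬝ᵥ pad b = a ⬝ᵥ b := by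
  simp (config := { decide := true }) [dotProduct, Fin.sum_univ_four, Fin.sum_univ_three,
    pad]

lemma norm_exp_single_sub_le (ω v : EuclideanSpace ℝ (Fin 3)) :
    ‖(WithLp.equiv 2 (Fin 4 → ℝ)).symm (exp (seX ω v) *ᵥ Pi.single 3 1)
      - (WithLp.equiv 2 (Fin 4 → ℝ)).symm (Pi.single 3 1)‖ ≤ ‖v‖ := by
  letI : NormedRing (Matrix (Fin 4) (Fin 4) ℝ) := Matrix.linftyOpNormedRing
  letI : NormedAlgebra ℝ (Matrix (Fin 4) (Fin 4) ℝ) := Matrix.linftyOpNormedAlgebra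
  set A := seX ω v with hA
  let T : Matrix (Fin 4) (Fin 4) ℝ →L[ℝ] EuclideanSpace ℝ (Fin 4) :=
    LinearMap.toContinuousLinearMap
      ((WithLp.linearEquiv 2 ℝ (Fin 4 → ℝ)).symm.toLinearMap ∘ₗ mulVecRight (Pi.single 3 1))
  have hT : ∀ M : Matrix (Fin 4) (Fin 4) ℝ,
      T M = (WithLp.equiv 2 (Fin 4 → ℝ)).symm (M *ᵥ Pi.single 3 1) := fun M => rfl
  have hvnorm : ‖v‖ = Real.sqrt ((fun i => v i) ⬝ᵥ (fun i => v i)) := by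
    rw [← norm_symm_eq]; rfl
  have hderiv : ∀ s : ℝ, HasDerivAt (fun s : ℝ => T (exp (s • A)))
      (T (exp (s • A) * A)) s := fun s =>
    T.hasFDerivAt.comp_hasDerivAt s (hasDerivAt_exp_smul_const A s)
  have hbound : ∀ s : ℝ, ‖T (exp (s • A) * A)‖ ≤ ‖v‖ := by
    intro s
    rw [hT, ← Matrix.mulVec_mulVec, hA, seX_mulVec_single, smul_seX, exp_seX_mulVec_pad,
      norm_symm_eq, dot_pad, dot_exp_skew _ (hat_transpose (s • ω)), hvnorm]
  have key := Convex.norm_image_sub_le_of_norm_hasDerivWithin_le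
    (f := fun s : ℝ => T (exp (s • A))) (f' := fun s => T (exp (s • A) * A))
    (fun s _ => (hderiv s).hasDerivWithinAt) (fun s _ => hbound s) convex_univ
    (Set.mem_univ (0 : ℝ)) (Set.mem_univ (1 : ℝ))
  simp only [one_smul, zero_smul, exp_zero] at key
  have h1 : T (exp A) = (WithLp.equiv 2 (Fin 4 → ℝ)).symm (exp A *ᵥ Pi.single 3 1) := hT _
  have h0 : T 1 = (WithLp.equiv 2 (Fin 4 → ℝ)).symm (Pi.single 3 1) := by
    rw [hT, Matrix.one_mulVec]
  rw [h1, h0] at key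
  simpa using key


lemma dot_pad_single (y : Fin 3 → ℝ) (c : ℝ) :
    (pad y + c • (Pi.single 3 1 : Fin 4 → ℝ)) ⬝ᵥ (pad y + c • (Pi.single 3 1 : Fin 4 → ℝ))
      = y ⬝ᵥ y + c * c := by
  simp (config := { decide := true }) [dotProduct, Fin.sum_univ_four, Fin.sum_univ_three,
    pad]

lemma dot_decomp (u : Fin 4 → ℝ) :
    u ⬝ᵥ u = (fun i : Fin 3 => u i.castSucc) ⬝ᵥ (fun i : Fin 3 => u i.castSucc) + u 3 * u 3 := by
  simp (config := { decide := true }) [dotProduct, Fin.sum_univ_four, Fin.sum_univ_three,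
    Fin.castSucc, show ((0 : Fin 3).castAdd 1) = (0 : Fin 4) from by decide,
    show ((1 : Fin 3).castAdd 1) = (1 : Fin 4) from by decide,
    show ((2 : Fin 3).castAdd 1) = (2 : Fin 4) from by decide]

end SE3Aux

open SE3Aux in
theorem stmt5 (R : ℝ) (hR : 0 ≤ R) (ω v : EuclideanSpace ℝ (Fin 3))
    (hθ : Real.sqrt (‖ω‖ ^ 2 + ‖v‖ ^ 2) ≤ R) :
    opNorm (exp (seX ω v)) ≤ 1 + R := by
  have hv : ‖v‖ ≤ R :=
    calc ‖v‖ = Real.sqrt (‖v‖ ^ 2) := (Real.sqrt_sq (norm_nonneg v)).symm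
    _ ≤ Real.sqrt (‖ω‖ ^ 2 + ‖v‖ ^ 2) :=
        Real.sqrt_le_sqrt (le_add_of_nonneg_left (sq_nonneg _))
    _ ≤ R := hθ
  unfold opNorm
  refine ContinuousLinearMap.opNorm_le_bound _ (by positivity) (fun u => ?_)
  set M := exp (seX ω v) with hM
  have hval : (LinearMap.toContinuousLinearMap (Matrix.toEuclideanLin M)) u
      = (WithLp.equiv 2 (Fin 4 → ℝ)).symm (M *ᵥ (WithLp.equiv 2 (Fin 4 → ℝ) u)) := rfl
  set u' : Fin 4 → ℝ := WithLp.equiv 2 (Fin 4 → ℝ) u with hu'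
  set x : Fin 3 → ℝ := fun i => u' i.castSucc with hx
  set c : ℝ := u' 3 with hc
  have hdec : M *ᵥ u' = (pad (exp (hat ω) *ᵥ x) + c • (Pi.single 3 1 : Fin 4 → ℝ))
      + c • (M *ᵥ Pi.single 3 1 - Pi.single 3 1) := by
    conv_lhs => rw [eq_pad_add_single u']
    rw [Matrix.mulVec_add, Matrix.mulVec_smul, hM, exp_seX_mulVec_pad, smul_sub]
    abel
  have hu : ‖u‖ = Real.sqrt (x ⬝ᵥ x + c * c) := by
    have h1 : ‖u‖ = Real.sqrt (u' ⬝ᵥ u') := norm_symm_eq u'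
    rw [h1, dot_decomp u', hx, hc]
  have ha : ‖(WithLp.equiv 2 (Fin 4 → ℝ)).symm
      (pad (exp (hat ω) *ᵥ x) + c • (Pi.single 3 1 : Fin 4 → ℝ))‖ = ‖u‖ := by
    rw [norm_symm_eq, dot_pad_single, dot_exp_skew _ (hat_transpose ω), hu]
  have hcle : |c| ≤ ‖u‖ := by
    rw [hu]
    calc |c| = Real.sqrt (c * c) := by rw [← Real.sqrt_sq_eq_abs, sq]
    _ ≤ Real.sqrt (x ⬝ᵥ x + c * c) :=
        Real.sqrt_le_sqrt (le_add_of_nonneg_left (dot_self_nonneg x))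
  have hd : ‖(WithLp.equiv 2 (Fin 4 → ℝ)).symm (M *ᵥ Pi.single 3 1 - Pi.single 3 1)‖ ≤ ‖v‖ := by
    rw [equiv_symm_sub]
    exact norm_exp_single_sub_le ω v
  rw [hval, hdec, equiv_symm_add, equiv_symm_smul]
  calc ‖_ + c • (WithLp.equiv 2 (Fin 4 → ℝ)).symm (M *ᵥ Pi.single 3 1 - Pi.single 3 1)‖
      ≤ ‖(WithLp.equiv 2 (Fin 4 → ℝ)).symm
          (pad (exp (hat ω) *ᵥ x) + c • (Pi.single 3 1 : Fin 4 → ℝ))‖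
        + ‖c • (WithLp.equiv 2 (Fin 4 → ℝ)).symm (M *ᵥ Pi.single 3 1 - Pi.single 3 1)‖ :=
      norm_add_le _ _
    _ = ‖u‖ + |c| * ‖(WithLp.equiv 2 (Fin 4 → ℝ)).symm (M *ᵥ Pi.single 3 1 - Pi.single 3 1)‖ := by
      rw [ha, norm_smul, Real.norm_eq_abs]
    _ ≤ ‖u‖ + ‖u‖ * R :=
      add_le_add_right (mul_le_mul hcle (hd.trans hv) (norm_nonneg _) (norm_nonneg u)) ‖u‖
    _ = (1 + R) * ‖u‖ := by ring
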